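/- Consider the equations Ṁ = [M,Ω] + [Γ,χ], Γ̇ = [Γ,Ω] on so(4) × so(4) with Ω = JM + MJ, where J has entries J₁₁ = J₂₂ = J₁, J₃₃ = J₄₄ = J₃, J₁₃ = J₃₁ = J_{13}, J₂₄ = J₄₂ = J_{24} (all other entries zero), and χ is skew-symmetric with only nonzero entries χ₁₂ = −χ₂₁. Then along any solution: Ṁ₁₂ = J₁₃(M₁₃M₁₂ + M₂₄M₃₄) + J₂₄(M₁₃M₃₄ + M₁₂M₂₄) and Ṁ₃₄ = −J₁₃(M₁₃M₃₄ + M₁₂M₂₄) − J₂₄(M₁₃M₁₂ + M₂₄M₃₄). Consequently the set {M₁₂ = 0, M₃₄ = 0} is invariant under the flow. -/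

import Mathlib

open Matrix

section HessAux

open Set Real

private lemma hess_fwd (J13 J24 : ℝ) (x y P Q : ℝ → ℝ)
    (hPc : Continuous P) (hQc : Continuous Q)
    (hx : ∀ t, HasDerivAt x
      (J13 * (P t * x t + Q t * y t) + J24 * (P t * y t + x t * Q t)) t)
    (hy : ∀ t, HasDerivAt y
      (-(J13 * (P t * y t + x t * Q t)) - J24 * (P t * x t + Q t * y t)) t)
    (hx0 : x 0 = 0) (hy0 : y 0 = 0) :
    ∀ t, 0 ≤ t → x t = 0 ∧ y t = 0 := by
  intro b hb
  set C : ℝ → ℝ := fun s => (|J13| + |J24|) * (|P s| + |Q s|) with hCdef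
  have hCc : Continuous C := by
    continuity
  obtain ⟨s₀, _, hs₀'⟩ := isCompact_Icc.exists_isMaxOn (s := Icc 0 b)
    (nonempty_Icc.mpr hb) hCc.continuousOn
  have hs₀ : ∀ s ∈ Icc (0:ℝ) b, C s ≤ C s₀ := fun s hs => hs₀' hs
  set K : ℝ := C s₀ with hKdef
  have hCnn : ∀ s, 0 ≤ C s := fun s => by positivity
  have hK0 : 0 ≤ K := hCnn s₀
  set f : ℝ → ℝ × ℝ := fun s => (x s, y s) with hfdef
  set f' : ℝ → ℝ × ℝ := fun s =>
    (J13 * (P s * x s + Q s * y s) + J24 * (P s * y s + x s * Q s),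
     -(J13 * (P s * y s + x s * Q s)) - J24 * (P s * x s + Q s * y s)) with hf'def
  have hder : ∀ s, HasDerivAt f (f' s) s := fun s => (hx s).prodMk (hy s)
  have hcont : ContinuousOn f (Icc 0 b) :=
    (continuous_iff_continuousAt.2 fun s => (hder s).continuousAt).continuousOn
  have hbound : ∀ s ∈ Ico 0 b, ‖f' s‖ ≤ K * ‖f s‖ + 0 := by
    intro s hs
    have hxm : |x s| ≤ ‖f s‖ := by
      have := norm_fst_le (f s); rwa [Real.norm_eq_abs] at this
    have hym : |y s| ≤ ‖f s‖ := by
      have := norm_snd_le (f s); rwa [Real.norm_eq_abs] at this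
    have hCK : C s ≤ K := hs₀ s ⟨hs.1, hs.2.le⟩
    have hm : 0 ≤ ‖f s‖ := norm_nonneg _
    have e1 : |P s * x s + Q s * y s| ≤ (|P s| + |Q s|) * ‖f s‖ := by
      refine (abs_add_le _ _).trans ?_
      rw [abs_mul, abs_mul]
      nlinarith [abs_nonneg (P s), abs_nonneg (Q s)]
    have e2 : |P s * y s + x s * Q s| ≤ (|P s| + |Q s|) * ‖f s‖ := by
      refine (abs_add_le _ _).trans ?_
      rw [abs_mul, abs_mul]
      nlinarith [abs_nonneg (P s), abs_nonneg (Q s)]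
    have h1 : |J13 * (P s * x s + Q s * y s) + J24 * (P s * y s + x s * Q s)|
        ≤ C s * ‖f s‖ := by
      refine (abs_add_le _ _).trans ?_
      rw [abs_mul, abs_mul]
      have a1 := mul_le_mul_of_nonneg_left e1 (abs_nonneg J13)
      have a2 := mul_le_mul_of_nonneg_left e2 (abs_nonneg J24)
      have hCs : C s = (|J13| + |J24|) * (|P s| + |Q s|) := rfl
      rw [hCs]; nlinarith [a1, a2]
    have h2 : |(-(J13 * (P s * y s + x s * Q s)) - J24 * (P s * x s + Q s * y s))|
        ≤ C s * ‖f s‖ := by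
      have : -(J13 * (P s * y s + x s * Q s)) - J24 * (P s * x s + Q s * y s)
          = -(J13 * (P s * y s + x s * Q s) + J24 * (P s * x s + Q s * y s)) := by ring
      rw [this, abs_neg]
      refine (abs_add_le _ _).trans ?_
      rw [abs_mul, abs_mul]
      have a1 := mul_le_mul_of_nonneg_left e2 (abs_nonneg J13)
      have a2 := mul_le_mul_of_nonneg_left e1 (abs_nonneg J24)
      have hCs : C s = (|J13| + |J24|) * (|P s| + |Q s|) := rfl
      rw [hCs]; nlinarith [a1, a2]
    have hCKm : C s * ‖f s‖ ≤ K * ‖f s‖ := mul_le_mul_of_nonneg_right hCK hm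
    rw [add_zero, Prod.norm_def]
    exact max_le ((Real.norm_eq_abs _ ▸ h1).trans hCKm)
      ((Real.norm_eq_abs _ ▸ h2).trans hCKm)
  have := norm_le_gronwallBound_of_norm_deriv_right_le hcont
    (fun s _ => (hder s).hasDerivWithinAt) (δ := 0)
    (by simp [hfdef, hx0, hy0]) hbound b ⟨hb, le_refl b⟩
  rw [gronwallBound_ε0, zero_mul] at this
  have hfz : f b = 0 := by
    have := le_antisymm this (norm_nonneg _)
    exact norm_eq_zero.mp this
  constructor
  · exact congrArg Prod.fst hfz
  · exact congrArg Prod.snd hfz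

private lemma hess_invariant (J13 J24 : ℝ) (x y P Q : ℝ → ℝ)
    (hPc : Continuous P) (hQc : Continuous Q)
    (hx : ∀ t, HasDerivAt x
      (J13 * (P t * x t + Q t * y t) + J24 * (P t * y t + x t * Q t)) t)
    (hy : ∀ t, HasDerivAt y
      (-(J13 * (P t * y t + x t * Q t)) - J24 * (P t * x t + Q t * y t)) t)
    (hx0 : x 0 = 0) (hy0 : y 0 = 0) :
    ∀ t, x t = 0 ∧ y t = 0 := by
  intro t
  rcases le_total 0 t with h | h
  · exact hess_fwd J13 J24 x y P Q hPc hQc hx hy hx0 hy0 t h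
  · have key := hess_fwd (-J13) (-J24) (fun s => x (-s)) (fun s => y (-s))
      (fun s => P (-s)) (fun s => Q (-s))
      (hPc.comp continuous_neg) (hQc.comp continuous_neg)
      (fun s => by
        have h1 := ((hx (-s)).comp s (hasDerivAt_neg s))
        exact h1.congr_deriv (by ring))
      (fun s => by
        have h1 := ((hy (-s)).comp s (hasDerivAt_neg s))
        exact h1.congr_deriv (by ring))
      (by simpa using hx0) (by simpa using hy0) (-t) (by linarith)
    simpa using key

end HessAux

/-- For the four-dimensional Hess–Appel'rot system on `so(4) × so(4)`:
the stated evolution equations for `M₁₂` and `M₃₄` hold, and the set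
`{M₁₂ = 0, M₃₄ = 0}` is invariant under the flow. -/
theorem four_dim_hess_appelrot_invariant_relations
    (J1 J3 J13 J24 chi12 : ℝ)
    (M Γ : ℝ → Matrix (Fin 4) (Fin 4) ℝ)
    (hskewM : ∀ t, (M t)ᵀ = -(M t)) (hskewΓ : ∀ t, (Γ t)ᵀ = -(Γ t))
    (J : Matrix (Fin 4) (Fin 4) ℝ)
    (hJ : J = !![J1, 0, J13, 0; 0, J1, 0, J24; J13, 0, J3, 0; 0, J24, 0, J3])
    (χ : Matrix (Fin 4) (Fin 4) ℝ)
    (hχ : χ = !![0, chi12, 0, 0; -chi12, 0, 0, 0; 0, 0, 0, 0; 0, 0, 0, 0])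
    (Ω : ℝ → Matrix (Fin 4) (Fin 4) ℝ) (hΩ : ∀ t, Ω t = J * M t + M t * J)
    (hM : ∀ (t : ℝ) (i j : Fin 4),
      HasDerivAt (fun s => M s i j)
        ((⁅M t, Ω t⁆ + ⁅Γ t, χ⁆ : Matrix (Fin 4) (Fin 4) ℝ) i j) t)
    (hΓ : ∀ (t : ℝ) (i j : Fin 4),
      HasDerivAt (fun s => Γ s i j)
        ((⁅Γ t, Ω t⁆ : Matrix (Fin 4) (Fin 4) ℝ) i j) t) :
    (∀ t, HasDerivAt (fun s => M s 0 1)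
        (J13 * (M t 0 2 * M t 0 1 + M t 1 3 * M t 2 3)
          + J24 * (M t 0 2 * M t 2 3 + M t 0 1 * M t 1 3)) t) ∧
    (∀ t, HasDerivAt (fun s => M s 2 3)
        (-(J13 * (M t 0 2 * M t 2 3 + M t 0 1 * M t 1 3))
          - J24 * (M t 0 2 * M t 0 1 + M t 1 3 * M t 2 3)) t) ∧
    ((M 0 0 1 = 0 ∧ M 0 2 3 = 0) → ∀ t, M t 0 1 = 0 ∧ M t 2 3 = 0) := by
  have key01 : ∀ t, (⁅M t, Ω t⁆ + ⁅Γ t, χ⁆ : Matrix (Fin 4) (Fin 4) ℝ) 0 1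
      = J13 * (M t 0 2 * M t 0 1 + M t 1 3 * M t 2 3)
          + J24 * (M t 0 2 * M t 2 3 + M t 0 1 * M t 1 3) := by
    intro t
    have hsk : ∀ (i j : Fin 4), M t j i = -(M t i j) := by
      intro i j
      have := congrFun (congrFun (hskewM t) i) j
      simpa using this
    have hskG : ∀ (i j : Fin 4), Γ t j i = -(Γ t i j) := by
      intro i j
      have := congrFun (congrFun (hskewΓ t) i) j
      simpa using this
    have e00 : M t 0 0 = 0 := by have := hsk 0 0; linarith
    have e11 : M t 1 1 = 0 := by have := hsk 1 1; linarith
    have e22 : M t 2 2 = 0 := by have := hsk 2 2; linarith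
    have e33 : M t 3 3 = 0 := by have := hsk 3 3; linarith
    have e10 : M t 1 0 = -(M t 0 1) := hsk 0 1
    have e20 : M t 2 0 = -(M t 0 2) := hsk 0 2
    have e30 : M t 3 0 = -(M t 0 3) := hsk 0 3
    have e21 : M t 2 1 = -(M t 1 2) := hsk 1 2
    have e31 : M t 3 1 = -(M t 1 3) := hsk 1 3
    have e32 : M t 3 2 = -(M t 2 3) := hsk 2 3
    have g00 : Γ t 0 0 = 0 := by have := hskG 0 0; linarith
    have g11 : Γ t 1 1 = 0 := by have := hskG 1 1; linarith
    rw [hΩ t]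
    subst hJ hχ
    simp [Ring.lie_def, Matrix.add_apply, Matrix.sub_apply, Matrix.mul_apply,
      Matrix.vecMul, dotProduct, Matrix.vecHead, Matrix.vecTail,
      Fin.sum_univ_four, e00, e11, e22, e33, e10, e20, e30, e21, e31, e32, g00, g11]
    ring
  have key23 : ∀ t, (⁅M t, Ω t⁆ + ⁅Γ t, χ⁆ : Matrix (Fin 4) (Fin 4) ℝ) 2 3
      = -(J13 * (M t 0 2 * M t 2 3 + M t 0 1 * M t 1 3))
          - J24 * (M t 0 2 * M t 0 1 + M t 1 3 * M t 2 3) := by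
    intro t
    have hsk : ∀ (i j : Fin 4), M t j i = -(M t i j) := by
      intro i j
      have := congrFun (congrFun (hskewM t) i) j
      simpa using this
    have hskG : ∀ (i j : Fin 4), Γ t j i = -(Γ t i j) := by
      intro i j
      have := congrFun (congrFun (hskewΓ t) i) j
      simpa using this
    have e00 : M t 0 0 = 0 := by have := hsk 0 0; linarith
    have e11 : M t 1 1 = 0 := by have := hsk 1 1; linarith
    have e22 : M t 2 2 = 0 := by have := hsk 2 2; linarith
    have e33 : M t 3 3 = 0 := by have := hsk 3 3; linarith
    have e10 : M t 1 0 = -(M t 0 1) := hsk 0 1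
    have e20 : M t 2 0 = -(M t 0 2) := hsk 0 2
    have e30 : M t 3 0 = -(M t 0 3) := hsk 0 3
    have e21 : M t 2 1 = -(M t 1 2) := hsk 1 2
    have e31 : M t 3 1 = -(M t 1 3) := hsk 1 3
    have e32 : M t 3 2 = -(M t 2 3) := hsk 2 3
    have g00 : Γ t 0 0 = 0 := by have := hskG 0 0; linarith
    have g11 : Γ t 1 1 = 0 := by have := hskG 1 1; linarith
    rw [hΩ t]
    subst hJ hχ
    simp [Ring.lie_def, Matrix.add_apply, Matrix.sub_apply, Matrix.mul_apply,
      Matrix.vecMul, dotProduct, Matrix.vecHead, Matrix.vecTail,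
      Fin.sum_univ_four, e00, e11, e22, e33, e10, e20, e30, e21, e31, e32, g00, g11]
    ring
  have d01 : ∀ t, HasDerivAt (fun s => M s 0 1)
      (J13 * (M t 0 2 * M t 0 1 + M t 1 3 * M t 2 3)
        + J24 * (M t 0 2 * M t 2 3 + M t 0 1 * M t 1 3)) t :=
    fun t => key01 t ▸ hM t 0 1
  have d23 : ∀ t, HasDerivAt (fun s => M s 2 3)
      (-(J13 * (M t 0 2 * M t 2 3 + M t 0 1 * M t 1 3))
        - J24 * (M t 0 2 * M t 0 1 + M t 1 3 * M t 2 3)) t :=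
    fun t => key23 t ▸ hM t 2 3
  refine ⟨d01, d23, ?_⟩
  rintro ⟨h1, h2⟩
  exact hess_invariant J13 J24 (fun t => M t 0 1) (fun t => M t 2 3)
    (fun t => M t 0 2) (fun t => M t 1 3)
    (continuous_iff_continuousAt.2 fun t => (hM t 0 2).continuousAt)
    (continuous_iff_continuousAt.2 fun t => (hM t 1 3).continuousAt)
    d01 d23 h1 h2
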